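/- Let (P1) be the linear program min { c·z : Az ≥ b, z ≥ 0 } with a finite optimum, let α* be an optimal dual solution for the constraints Az ≥ b, and let ᾱ ≥ α* (componentwise, with ᾱ ≥ 0). Then the optimization problem (P2) min { c·z + ᾱ·(b − Az)⁺ : z ≥ 0 }, where (b − Az)⁺ denotes the componentwise positive part, has the same optimal value as (P1). -/
import Mathlib


open Matrix

/-- Lemma 1 (penalty reformulation): if `ᾱ` upper-bounds an optimal dual of
`(P1) min { c·z : Az ≥ b, z ≥ 0 }`, then
`(P2) min { c·z + ᾱ·(b − Az)⁺ : z ≥ 0 }` has the same optimal value. -/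
theorem penalty_reformulation_same_optimal_value
    {m n : ℕ} (A : Matrix (Fin m) (Fin n) ℝ) (b : Fin m → ℝ) (c : Fin n → ℝ)
    (zstar : Fin n → ℝ) (αstar αbar : Fin m → ℝ)
    -- zstar is an optimal solution of (P1) (so (P1) has a finite optimum)
    (hz_nonneg : 0 ≤ zstar) (hz_feas : b ≤ A.mulVec zstar)
    (hz_opt : ∀ z : Fin n → ℝ, 0 ≤ z → b ≤ A.mulVec z → c ⬝ᵥ zstar ≤ c ⬝ᵥ z)
    -- αstar is an optimal dual solution: dual feasible and strong duality holds
    (hα_nonneg : 0 ≤ αstar) (hα_feas : A.vecMul αstar ≤ c)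
    (h_strong_duality : b ⬝ᵥ αstar = c ⬝ᵥ zstar)
    -- ᾱ upper-bounds αstar componentwise and is nonnegative
    (h_bound : αstar ≤ αbar) (h_bar_nonneg : 0 ≤ αbar) :
    IsLeast {v : ℝ | ∃ z : Fin n → ℝ, 0 ≤ z ∧
        v = c ⬝ᵥ z + αbar ⬝ᵥ (fun i => max (b i - A.mulVec z i) 0)}
      (c ⬝ᵥ zstar) := by

  constructor
  · exact ⟨zstar, hz_nonneg, by
      have h0 : (fun i => max (b i - A.mulVec zstar i) 0) = fun _ => (0:ℝ) := by
        funext i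
        exact max_eq_right (by linarith [hz_feas i])
      rw [h0]
      simp⟩
  · rintro v ⟨z, hz, rfl⟩
    have h1 : A.vecMul αstar ⬝ᵥ z ≤ c ⬝ᵥ z := by
      apply Finset.sum_le_sum
      intro i _
      exact mul_le_mul_of_nonneg_right (hα_feas i) (hz i)
    have h2 : αstar ⬝ᵥ (fun i => b i - A.mulVec z i) ≤
        αbar ⬝ᵥ (fun i => max (b i - A.mulVec z i) 0) := by
      apply Finset.sum_le_sum
      intro i _
      dsimp only
      rcases le_or_gt (b i - A.mulVec z i) 0 with h | h
      · calc αstar i * (b i - A.mulVec z i) ≤ 0 :=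
              mul_nonpos_of_nonneg_of_nonpos (hα_nonneg i) h
          _ = αbar i * max (b i - A.mulVec z i) 0 := by
              rw [max_eq_right h, mul_zero]
      · rw [max_eq_left h.le]
        exact mul_le_mul_of_nonneg_right (h_bound i) h.le
    have h3 : αstar ⬝ᵥ (fun i => b i - A.mulVec z i) =
        b ⬝ᵥ αstar - A.vecMul αstar ⬝ᵥ z := by
      rw [← Matrix.dotProduct_mulVec]
      simp [dotProduct, mul_sub, Finset.sum_sub_distrib, mul_comm]
    rw [← h_strong_duality]
    rw [h3] at h2
    linarith
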